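/- Let n ≥ 0 and let z, z_0, ..., z_{n-1} be complex numbers. For every α ∈ ℂ with α ≠ 0 and every β ∈ ℂ, the Abel-Goncharov polynomial satisfies the shift-invariance and homogeneity property G_n(αz + β; αz_0 + β, αz_1 + β, ..., αz_{n-1} + β) = α^n · G_n(z; z_0, z_1, ..., z_{n-1}). -/

import Mathlib

/-- The Abel-Goncharov polynomials, defined by `G_0(z) = 1` and, for `n ≥ 1`,
`G_n(z; z_0, ..., z_{n-1}) = z^n - Σ_{k=0}^{n-1} binom(n, k) · z_k^{n-k} · G_k(z; z_0, ..., z_{k-1})`. -/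
noncomputable def AG : (n : ℕ) → ℂ → (Fin n → ℂ) → ℂ
  | 0, _, _ => 1
  | n + 1, z, w =>
      z ^ (n + 1) - ∑ k ∈ (Finset.range (n + 1)).attach,
        ((n + 1).choose k.1 : ℂ) * (w ⟨k.1, Finset.mem_range.mp k.2⟩) ^ (n + 1 - k.1) *
          AG k.1 z (fun i => w ⟨i.1, by
            have h1 := i.isLt
            have h2 := Finset.mem_range.mp k.2
            omega⟩)
  termination_by n _ _ => n
  decreasing_by exact Finset.mem_range.mp k.2

noncomputable def AG' (n : ℕ) (z : ℂ) (u : ℕ → ℂ) : ℂ := AG n z (fun i => u i.1)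

lemma AG'_zero (z : ℂ) (u : ℕ → ℂ) : AG' 0 z u = 1 := by
  simp [AG', AG]

lemma AG'_succ (n : ℕ) (z : ℂ) (u : ℕ → ℂ) :
    AG' (n+1) z u = z ^ (n+1) - ∑ k ∈ Finset.range (n+1),
      ((n+1).choose k : ℂ) * u k ^ (n+1-k) * AG' k z u := by
  rw [AG', AG]
  rw [← Finset.sum_attach (Finset.range (n+1))
      (fun k => ((n+1).choose k : ℂ) * u k ^ (n+1-k) * AG' k z u)]
  rfl

lemma AG'_sum (m : ℕ) (z : ℂ) (u : ℕ → ℂ) :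
    ∑ k ∈ Finset.range (m+1), (m.choose k : ℂ) * u k ^ (m-k) * AG' k z u = z ^ m := by
  cases m with
  | zero => simp [AG'_zero]
  | succ m =>
      rw [Finset.sum_range_succ, AG'_succ]
      simp [Nat.choose_self]

lemma sum_swap_tri (N : ℕ) (f : ℕ → ℕ → ℂ) :
    ∑ k ∈ Finset.range (N+1), ∑ j ∈ Finset.range (N+1-k), f k j
      = ∑ j ∈ Finset.range (N+1), ∑ k ∈ Finset.range (N+1-j), f k j := by
  have h : ∀ g : ℕ → ℕ → ℂ,
      ∀ k ∈ Finset.range (N+1), ∑ j ∈ Finset.range (N+1-k), g k j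
        = ∑ j ∈ Finset.range (N+1), if k + j ≤ N then g k j else 0 := by
    intro g k hk
    rw [← Finset.sum_filter]
    apply Finset.sum_congr
    · ext j
      simp only [Finset.mem_filter, Finset.mem_range] at *
      omega
    · intros; rfl
  rw [Finset.sum_congr rfl (h f), Finset.sum_congr rfl (h (fun k j => f j k))]
  rw [Finset.sum_comm]
  apply Finset.sum_congr rfl
  intro j _
  apply Finset.sum_congr rfl
  intro k _
  rw [Nat.add_comm]

lemma tri_choose {N k j : ℕ} (h : k + j ≤ N) :
    N.choose k * (N - k).choose j = N.choose j * (N - j).choose k := by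
  have h1 := Nat.choose_mul (n := N) (k := k + j) (s := k) (Nat.le_add_right _ _)
  have h2 := Nat.choose_mul (n := N) (k := k + j) (s := j) (Nat.le_add_left _ _)
  have h3 : (k + j).choose k = (k + j).choose j := Nat.choose_symm_add
  have h4 : k + j - k = j := by omega
  have h5 : k + j - j = k := by omega
  rw [h4] at h1; rw [h5] at h2
  rw [h3] at h1
  exact h1.symm.trans h2

lemma AG'_shift_sum (N : ℕ) (z β : ℂ) (u : ℕ → ℂ) :
    ∑ k ∈ Finset.range (N+1), (N.choose k : ℂ) * (u k + β) ^ (N-k) * AG' k z u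
      = (z + β) ^ N := by
  have expand : ∀ k ∈ Finset.range (N+1),
      (N.choose k : ℂ) * (u k + β) ^ (N-k) * AG' k z u
        = ∑ j ∈ Finset.range (N+1-k),
            (N.choose k : ℂ) * ((N-k).choose j : ℂ) * β ^ j * u k ^ (N-k-j) * AG' k z u := by
    intro k hk
    have hk' : k ≤ N := by simpa [Nat.lt_succ_iff] using Finset.mem_range.mp hk
    rw [add_comm (u k) β, add_pow]
    have : N + 1 - k = N - k + 1 := by omega
    rw [this, mul_assoc, Finset.sum_mul, Finset.mul_sum]
    apply Finset.sum_congr rfl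
    intro j _
    ring
  rw [Finset.sum_congr rfl expand, sum_swap_tri]
  have inner : ∀ j ∈ Finset.range (N+1),
      ∑ k ∈ Finset.range (N+1-j),
          (N.choose k : ℂ) * ((N-k).choose j : ℂ) * β ^ j * u k ^ (N-k-j) * AG' k z u
        = (N.choose j : ℂ) * β ^ j * z ^ (N-j) := by
    intro j hj
    have hj' : j ≤ N := by simpa [Nat.lt_succ_iff] using Finset.mem_range.mp hj
    have hr : N + 1 - j = (N - j) + 1 := by omega
    rw [hr]
    have step : ∀ k ∈ Finset.range ((N-j)+1),
        (N.choose k : ℂ) * ((N-k).choose j : ℂ) * β ^ j * u k ^ (N-k-j) * AG' k z u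
          = (N.choose j : ℂ) * β ^ j * ((N-j).choose k * u k ^ ((N-j)-k) * AG' k z u) := by
      intro k hk
      have hk' : k ≤ N - j := by simpa [Nat.lt_succ_iff] using Finset.mem_range.mp hk
      have hkj : k + j ≤ N := by omega
      have hc : (N.choose k : ℂ) * ((N-k).choose j : ℂ) = (N.choose j : ℂ) * ((N-j).choose k : ℂ) := by
        push_cast [← Nat.cast_mul]
        exact_mod_cast congrArg (Nat.cast (R := ℂ)) (tri_choose hkj)
      have he : N - k - j = (N - j) - k := by omega
      rw [he]
      calc (N.choose k : ℂ) * ((N-k).choose j : ℂ) * β ^ j * u k ^ ((N-j)-k) * AG' k z u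
          = ((N.choose k : ℂ) * ((N-k).choose j : ℂ)) * (β ^ j * u k ^ ((N-j)-k) * AG' k z u) := by ring
        _ = ((N.choose j : ℂ) * ((N-j).choose k : ℂ)) * (β ^ j * u k ^ ((N-j)-k) * AG' k z u) := by rw [hc]
        _ = (N.choose j : ℂ) * β ^ j * ((N-j).choose k * u k ^ ((N-j)-k) * AG' k z u) := by ring
    rw [Finset.sum_congr rfl step, ← Finset.mul_sum, AG'_sum]
  rw [Finset.sum_congr rfl inner]
  rw [add_comm z β, add_pow]
  apply Finset.sum_congr rfl
  intro j _
  ring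

lemma AG'_shift : ∀ (n : ℕ) (z β : ℂ) (u : ℕ → ℂ),
    AG' n (z + β) (fun i => u i + β) = AG' n z u := by
  intro n
  induction n using Nat.strong_induction_on with
  | _ n IH =>
    intro z β u
    match n with
    | 0 => simp [AG'_zero]
    | m + 1 =>
      rw [AG'_succ, AG'_succ]
      have hIH : ∀ k ∈ Finset.range (m+1),
          ((m+1).choose k : ℂ) * (u k + β) ^ (m+1-k) * AG' k (z + β) (fun i => u i + β)
            = ((m+1).choose k : ℂ) * (u k + β) ^ (m+1-k) * AG' k z u := by
        intro k hk
        rw [IH k (Finset.mem_range.mp hk)]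
      rw [Finset.sum_congr rfl hIH]
      have hsum := AG'_shift_sum (m+1) z β u
      rw [Finset.sum_range_succ] at hsum
      simp only [Nat.choose_self, Nat.sub_self, pow_zero, Nat.cast_one, one_mul, mul_one] at hsum
      have : ∑ k ∈ Finset.range (m+1), ((m+1).choose k : ℂ) * (u k + β) ^ (m+1-k) * AG' k z u
          = (z + β) ^ (m+1) - AG' (m+1) z u := by
        rw [← hsum]; ring
      rw [this, AG'_succ]
      ring

lemma AG'_smul (α : ℂ) : ∀ (n : ℕ) (z : ℂ) (u : ℕ → ℂ),
    AG' n (α * z) (fun i => α * u i) = α ^ n * AG' n z u := by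
  intro n
  induction n using Nat.strong_induction_on with
  | _ n IH =>
    intro z u
    match n with
    | 0 => simp [AG'_zero]
    | m + 1 =>
      rw [AG'_succ, AG'_succ]
      have hIH : ∀ k ∈ Finset.range (m+1),
          ((m+1).choose k : ℂ) * (α * u k) ^ (m+1-k) * AG' k (α * z) (fun i => α * u i)
            = α ^ (m+1) * (((m+1).choose k : ℂ) * u k ^ (m+1-k) * AG' k z u) := by
        intro k hk
        have hk' : k ≤ m := by simpa [Nat.lt_succ_iff] using Finset.mem_range.mp hk
        rw [IH k (Finset.mem_range.mp hk), mul_pow]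
        have : α ^ (m+1-k) * α ^ k = α ^ (m+1) := by
          rw [← pow_add]; congr 1; omega
        calc (↑((m+1).choose k) : ℂ) * (α ^ (m+1-k) * u k ^ (m+1-k)) * (α ^ k * AG' k z u)
            = (α ^ (m+1-k) * α ^ k) * ((↑((m+1).choose k) : ℂ) * u k ^ (m+1-k) * AG' k z u) := by ring
          _ = α ^ (m+1) * ((↑((m+1).choose k) : ℂ) * u k ^ (m+1-k) * AG' k z u) := by rw [this]
      rw [Finset.sum_congr rfl hIH, ← Finset.mul_sum, mul_pow]
      ring

theorem stmt12 (n : ℕ) (z : ℂ) (w : Fin n → ℂ) (α β : ℂ) (hα : α ≠ 0) :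
    AG n (α * z + β) (fun i => α * w i + β) = α ^ n * AG n z w := by
  set u : ℕ → ℂ := fun i => if h : i < n then w ⟨i, h⟩ else 0 with hu
  have h1 : AG n z w = AG' n z u := by
    unfold AG'
    congr 1
    funext i
    simp [hu, i.isLt]
  have h2 : AG n (α * z + β) (fun i => α * w i + β)
      = AG' n (α * z + β) (fun i => α * u i + β) := by
    unfold AG'
    congr 1
    funext i
    simp [hu, i.isLt]
  rw [h1, h2, AG'_shift n (α * z) β (fun i => α * u i), AG'_smul]
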